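/- If G is a k-colorable graph (k ≥ 2), then FCC(G)/Ind(G) ≤ k/2, i.e., the fractional clique cover is a (k/2)-approximation of the index coding broadcast rate. -/

import Mathlib

open Finset

variable {V : Type} [Fintype V] [DecidableEq V]

/-- Fractional vertex cover LP value. -/
noncomputable def FVC (G : SimpleGraph V) : ℝ :=
  sInf {s : ℝ | ∃ x : V → ℝ, (∀ v, 0 ≤ x v ∧ x v ≤ 1) ∧
    (∀ u v, G.Adj u v → 1 ≤ x u + x v) ∧ s = ∑ v, x v}

/-- Fractional matching LP value. -/
noncomputable def FMM (G : SimpleGraph V) [DecidableRel G.Adj] : ℝ :=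
  sSup {s : ℝ | ∃ y : Sym2 V → ℝ, (∀ e, 0 ≤ y e ∧ y e ≤ 1) ∧
    (∀ v : V, ∑ e ∈ G.edgeFinset, (if v ∈ e then y e else 0) ≤ 1) ∧
    s = ∑ e ∈ G.edgeFinset, y e}

/-- Fractional clique packing LP value. -/
noncomputable def FCP (G : SimpleGraph V) : ℝ :=
  sSup {s : ℝ | ∃ x : Finset V → ℝ, (∀ C, 0 ≤ x C ∧ x C ≤ 1) ∧
    (∀ C : Finset V, ¬ G.IsClique (C : Set V) → x C = 0) ∧
    (∀ v : V, ∑ C : Finset V, (if v ∈ C then x C else 0) ≤ 1) ∧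
    s = ∑ C : Finset V, x C * ((C.card : ℝ) - 1)}

/-- Fractional clique cover LP value. -/
noncomputable def FCC (G : SimpleGraph V) : ℝ :=
  sInf {s : ℝ | ∃ y : Finset V → ℝ, (∀ C, 0 ≤ y C ∧ y C ≤ 1) ∧
    (∀ C : Finset V, ¬ G.IsClique (C : Set V) → y C = 0) ∧
    (∀ v : V, 1 ≤ ∑ C : Finset V, (if v ∈ C then y C else 0)) ∧
    s = ∑ C : Finset V, y C}

/-- Maximum independent set size. -/
noncomputable def alphaNum (G : SimpleGraph V) : ℕ :=
  sSup {k : ℕ | ∃ S : Finset V,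
    ((S : Set V).Pairwise fun u v => ¬ G.Adj u v) ∧ S.card = k}

/-- Clique number. -/
noncomputable def cliqueNum (G : SimpleGraph V) : ℕ :=
  sSup {k : ℕ | ∃ C : Finset V, G.IsNClique k C}

/-- Edge-and-small-clique constrained fractional independent set LP value `α_{Fk}`. -/
noncomputable def alphaF (G : SimpleGraph V) (k : ℕ) : ℝ :=
  sSup {s : ℝ | ∃ x : V → ℝ, (∀ v, 0 ≤ x v ∧ x v ≤ 1) ∧
    (∀ C : Finset V, G.IsClique (C : Set V) → C.card ≤ k → ∑ v ∈ C, x v ≤ 1) ∧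
    s = ∑ v, x v}

/-- Minimum vertex cover size. -/
noncomputable def VC (G : SimpleGraph V) : ℕ :=
  sInf {k : ℕ | ∃ S : Finset V,
    (∀ u v, G.Adj u v → u ∈ S ∨ v ∈ S) ∧ S.card = k}

/-- Storage capacity. -/
noncomputable def Cap (G : SimpleGraph V) : ℝ :=
  sSup {x : ℝ | ∃ q : ℕ, 2 ≤ q ∧ ∃ C : Finset (V → Fin q),
    (∀ v : V, ∃ f : ({u : V // G.Adj v u} → Fin q) → Fin q,
      ∀ c ∈ C, f (fun u => c u.1) = c v) ∧
    x = Real.logb q C.card}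

/-- Index coding broadcast rate over alphabet of size `q`. -/
noncomputable def IndQ (G : SimpleGraph V) (q : ℕ) : ℕ :=
  sInf {l : ℕ | ∃ f : (V → Fin q) → (Fin l → Fin q), ∀ v : V,
    ∃ g : (Fin l → Fin q) → ({u : V // G.Adj v u} → Fin q) → Fin q,
      ∀ p : V → Fin q, g (f p) (fun u => p u.1) = p v}

/-- Index coding broadcast rate. -/
noncomputable def Ind (G : SimpleGraph V) : ℝ :=
  sInf {x : ℝ | ∃ q : ℕ, 2 ≤ q ∧ x = IndQ G q}


section Aux

lemma indep_card_le_alphaNum (G : SimpleGraph V) (S : Finset V)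
    (hS : (S : Set V).Pairwise fun u v => ¬ G.Adj u v) : S.card ≤ alphaNum G := by
  apply le_csSup
  · refine ⟨Fintype.card V, ?_⟩
    rintro n ⟨T, _, rfl⟩
    exact T.card_le_univ
  · exact ⟨S, hS, rfl⟩

lemma alphaNum_le_IndQ (G : SimpleGraph V) (q : ℕ) (hq : 2 ≤ q) :
    alphaNum G ≤ IndQ G q := by
  classical
  have hqpos : 0 < q := by omega
  have hne : {l : ℕ | ∃ f : (V → Fin q) → (Fin l → Fin q), ∀ v : V,
      ∃ g : (Fin l → Fin q) → ({u : V // G.Adj v u} → Fin q) → Fin q,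
        ∀ p : V → Fin q, g (f p) (fun u => p u.1) = p v}.Nonempty := by
    refine ⟨Fintype.card V, fun p i => p ((Fintype.equivFin V).symm i), fun v =>
      ⟨fun b _ => b (Fintype.equivFin V v), fun p => by simp⟩⟩
  have hmem : ∃ f : (V → Fin q) → (Fin (IndQ G q) → Fin q), ∀ v : V,
      ∃ g : (Fin (IndQ G q) → Fin q) → ({u : V // G.Adj v u} → Fin q) → Fin q,
        ∀ p : V → Fin q, g (f p) (fun u => p u.1) = p v := Nat.sInf_mem hne
  obtain ⟨f, hf⟩ := hmem
  refine csSup_le ⟨0, ∅, by simp, by simp⟩ ?_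
  rintro n ⟨S, hS, rfl⟩
  have z : Fin q := ⟨0, hqpos⟩
  set ext : ({v // v ∈ S} → Fin q) → V → Fin q :=
    fun σ v => if h : v ∈ S then σ ⟨v, h⟩ else z with hext
  have hinj : Function.Injective (fun σ => f (ext σ)) := by
    intro σ₁ σ₂ hEq
    have hEq' : f (ext σ₁) = f (ext σ₂) := hEq
    funext v
    obtain ⟨g, hg⟩ := hf v.1
    have h1 := hg (ext σ₁)
    have h2 := hg (ext σ₂)
    have hnb : (fun u : {u : V // G.Adj v.1 u} => ext σ₁ u.1)
        = fun u => ext σ₂ u.1 := by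
      funext u
      have hvne : v.1 ≠ u.1 := G.ne_of_adj u.2
      have hu : u.1 ∉ S := fun huS => hS v.2 huS hvne u.2
      simp [hext, hu]
    calc σ₁ v = ext σ₁ v.1 := by simp [hext]
      _ = g (f (ext σ₁)) (fun u => ext σ₁ u.1) := h1.symm
      _ = g (f (ext σ₂)) (fun u => ext σ₂ u.1) := by rw [hEq', hnb]
      _ = ext σ₂ v.1 := h2
      _ = σ₂ v := by simp [hext]
  have hcard := Fintype.card_le_of_injective _ hinj
  simp only [Fintype.card_fun, Fintype.card_coe, Fintype.card_fin] at hcard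
  exact (Nat.pow_le_pow_iff_right (by omega : 1 < q)).mp hcard

lemma alphaNum_le_Ind (G : SimpleGraph V) : (alphaNum G : ℝ) ≤ Ind G := by
  refine le_csInf ⟨(IndQ G 2 : ℝ), 2, le_refl 2, rfl⟩ ?_
  rintro x ⟨q, hq, rfl⟩
  exact_mod_cast alphaNum_le_IndQ G q hq


lemma pair_cover (G : SimpleGraph V) {k : ℕ} (c : V → Fin k)
    (hc : ∀ u v, G.Adj u v → c u ≠ c v) (i j : Fin k) (hij : i ≠ j) :
    ∃ F : Finset (Finset V),
      (∀ C ∈ F, G.IsClique (C : Set V)) ∧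
      (∀ C ∈ F, C.Nonempty ∧ ∀ v ∈ C, c v = i ∨ c v = j) ∧
      (∀ v : V, c v = i ∨ c v = j → ∃ C ∈ F, v ∈ C) ∧
      F.card ≤ alphaNum G := by
  classical
  set X : Finset V := univ.filter (fun v => c v = i) with hXdef
  set Y : Finset V := univ.filter (fun v => c v = j) with hYdef
  set N : V → Finset V := fun v => univ.filter (fun u => G.Adj v u ∧ c u = j) with hNdef
  have hXmem : ∀ v, v ∈ X ↔ c v = i := by simp [hXdef]
  have hYmem : ∀ v, v ∈ Y ↔ c v = j := by simp [hYdef]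
  have hNmem : ∀ v u, u ∈ N v ↔ G.Adj v u ∧ c u = j := by simp [hNdef]
  obtain ⟨A, hAX, hAeq⟩ := Finset.exists_mem_eq_sup' (X.powerset_nonempty)
    (fun B => B.card - (B.biUnion N).card)
  have hAX' : A ⊆ X := Finset.mem_powerset.mp hAX
  set d : ℕ := A.card - (A.biUnion N).card with hd
  have hdle : ∀ B ⊆ X, B.card - (B.biUnion N).card ≤ d := by
    intro B hB
    simpa [hAeq] using Finset.le_sup' (fun B : Finset V => B.card - (B.biUnion N).card)
      (Finset.mem_powerset.mpr hB)
  -- Hall's condition for the bipartite graph between X and Y, with d dummy vertices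
  have hHall : ∀ s : Finset {v : V // v ∈ X},
      s.card ≤ (s.biUnion (fun x => ((N x.1).map (Function.Embedding.inl (β := Fin d))) ∪
        ((univ : Finset (Fin d)).map Function.Embedding.inr))).card := by
    intro s
    rcases s.eq_empty_or_nonempty with rfl | hs
    · simp
    · set B : Finset V := s.image Subtype.val with hB
      have hBcard : B.card = s.card := Finset.card_image_of_injective _ Subtype.val_injective
      have hBX : B ⊆ X := by
        intro v hv
        obtain ⟨x, _, rfl⟩ := Finset.mem_image.mp hv
        exact x.2
      have hsub : ((B.biUnion N).map (Function.Embedding.inl (β := Fin d))) ∪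
          ((univ : Finset (Fin d)).map Function.Embedding.inr)
          ⊆ s.biUnion (fun x => ((N x.1).map Function.Embedding.inl) ∪
            ((univ : Finset (Fin d)).map Function.Embedding.inr)) := by
        intro a ha
        rcases Finset.mem_union.mp ha with ha | ha
        · obtain ⟨u, hu, rfl⟩ := Finset.mem_map.mp ha
          obtain ⟨v, hv, huv⟩ := Finset.mem_biUnion.mp hu
          obtain ⟨x, hx, rfl⟩ := Finset.mem_image.mp hv
          exact Finset.mem_biUnion.mpr ⟨x, hx,
            Finset.mem_union_left _ (Finset.mem_map_of_mem _ huv)⟩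
        · obtain ⟨x, hx⟩ := hs
          exact Finset.mem_biUnion.mpr ⟨x, hx, Finset.mem_union_right _ ha⟩
      have hdisj : Disjoint ((B.biUnion N).map (Function.Embedding.inl (β := Fin d)))
          ((univ : Finset (Fin d)).map (Function.Embedding.inr (α := V))) := by
        rw [Finset.disjoint_left]
        rintro a ha hb
        obtain ⟨u, _, rfl⟩ := Finset.mem_map.mp ha
        obtain ⟨m, _, hm⟩ := Finset.mem_map.mp hb
        simp [Function.Embedding.inl, Function.Embedding.inr] at hm
      have hcard2 := Finset.card_le_card hsub
      rw [Finset.card_union_of_disjoint hdisj, Finset.card_map, Finset.card_map,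
        Finset.card_univ, Fintype.card_fin] at hcard2
      have := hdle B hBX
      omega
  obtain ⟨f, hfinj, hf⟩ := (Finset.all_card_le_biUnion_card_iff_exists_injective _).mp hHall
  have hfN : ∀ (x : {v : V // v ∈ X}) u, f x = Sum.inl u → u ∈ N x.1 := by
    intro x u hu
    have hfx := hf x
    rw [hu] at hfx
    rcases Finset.mem_union.mp hfx with h | h
    · obtain ⟨w, hw, hww⟩ := Finset.mem_map.mp h
      have : w = u := by exact Sum.inl_injective hww
      exact this ▸ hw
    · obtain ⟨m, _, hm⟩ := Finset.mem_map.mp h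
      simp [Function.Embedding.inr] at hm
  set clq : {v : V // v ∈ X} → Finset V :=
    fun x => Sum.elim (fun u => ({x.1, u} : Finset V)) (fun _ => {x.1}) (f x) with hclq
  set F₁ : Finset (Finset V) := univ.image clq with hF1
  set M : Finset V := Y.filter (fun y => ∃ x, f x = Sum.inl y) with hMdef
  set F₂ : Finset (Finset V) := (Y \ M).image (fun y => ({y} : Finset V)) with hF2
  refine ⟨F₁ ∪ F₂, ?_, ?_, ?_, ?_⟩
  · -- cliques
    intro C hC
    rcases Finset.mem_union.mp hC with hC | hC
    · obtain ⟨x, _, rfl⟩ := Finset.mem_image.mp hC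
      cases hfx : f x with
      | inl u =>
        have hadj : G.Adj x.1 u := ((hNmem _ _).mp (hfN x u hfx)).1
        simp only [hclq, hfx, Sum.elim_inl]
        rw [SimpleGraph.isClique_iff]
        intro a ha b hb hab
        simp only [Finset.coe_insert, Finset.coe_singleton, Set.mem_insert_iff,
          Set.mem_singleton_iff] at ha hb
        rcases ha with rfl | rfl <;> rcases hb with rfl | rfl
        · exact absurd rfl hab
        · exact hadj
        · exact hadj.symm
        · exact absurd rfl hab
      | inr m =>
        simp only [hclq, hfx, Sum.elim_inr]
        rw [SimpleGraph.isClique_iff]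
        simp
    · obtain ⟨y, _, rfl⟩ := Finset.mem_image.mp hC
      rw [SimpleGraph.isClique_iff]
      simp
  · -- nonempty and colors
    intro C hC
    rcases Finset.mem_union.mp hC with hC | hC
    · obtain ⟨x, _, rfl⟩ := Finset.mem_image.mp hC
      have hxi : c x.1 = i := (hXmem _).mp x.2
      cases hfx : f x with
      | inl u =>
        have huj : c u = j := ((hNmem _ _).mp (hfN x u hfx)).2
        simp only [hclq, hfx, Sum.elim_inl]
        refine ⟨⟨x.1, by simp⟩, ?_⟩
        intro v hv
        rcases Finset.mem_insert.mp hv with rfl | hv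
        · exact Or.inl hxi
        · rw [Finset.mem_singleton.mp hv]
          exact Or.inr huj
      | inr m =>
        simp only [hclq, hfx, Sum.elim_inr]
        refine ⟨⟨x.1, by simp⟩, ?_⟩
        intro v hv
        rw [Finset.mem_singleton.mp hv]
        exact Or.inl hxi
    · obtain ⟨y, hy, rfl⟩ := Finset.mem_image.mp hC
      have hyj : c y = j := (hYmem _).mp (Finset.mem_sdiff.mp hy).1
      refine ⟨⟨y, by simp⟩, ?_⟩
      intro v hv
      rw [Finset.mem_singleton.mp hv]
      exact Or.inr hyj
  · -- coverage
    intro v hv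
    rcases hv with hvi | hvj
    · have hvX : v ∈ X := (hXmem v).mpr hvi
      refine ⟨clq ⟨v, hvX⟩, Finset.mem_union_left _
        (Finset.mem_image_of_mem _ (Finset.mem_univ _)), ?_⟩
      cases hfx : f ⟨v, hvX⟩ with
      | inl u => simp [hclq, hfx]
      | inr m => simp [hclq, hfx]
    · have hvY : v ∈ Y := (hYmem v).mpr hvj
      by_cases hvM : v ∈ M
      · obtain ⟨_, x, hx⟩ := Finset.mem_filter.mp hvM
        refine ⟨clq x, Finset.mem_union_left _
          (Finset.mem_image_of_mem _ (Finset.mem_univ _)), ?_⟩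
        simp [hclq, hx]
      · exact ⟨{v}, Finset.mem_union_right _
          (Finset.mem_image_of_mem _ (Finset.mem_sdiff.mpr ⟨hvY, hvM⟩)), by simp⟩
  · -- cardinality
    have h1 : F₁.card ≤ X.card := le_trans Finset.card_image_le
      (by rw [Finset.card_univ, Fintype.card_coe])
    have hMY : M ⊆ Y := Finset.filter_subset _ _
    have h2 : F₂.card ≤ Y.card - M.card := le_trans Finset.card_image_le
      (le_of_eq (Finset.card_sdiff_of_subset hMY))
    have himg : (univ.image f) ⊆ (M.map (Function.Embedding.inl (β := Fin d))) ∪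
        ((univ : Finset (Fin d)).map Function.Embedding.inr) := by
      intro a ha
      obtain ⟨x, _, rfl⟩ := Finset.mem_image.mp ha
      cases hfx : f x with
      | inl u =>
        have hu := hfN x u hfx
        have huY : u ∈ Y := (hYmem u).mpr ((hNmem _ _).mp hu).2
        have huM : u ∈ M := Finset.mem_filter.mpr ⟨huY, ⟨x, hfx⟩⟩
        exact Finset.mem_union_left _ (Finset.mem_map_of_mem _ huM)
      | inr m =>
        exact Finset.mem_union_right _ (Finset.mem_map_of_mem _ (Finset.mem_univ m))
    have hXMd : X.card ≤ M.card + d := by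
      have hc1 : (univ.image f).card = X.card := by
        rw [Finset.card_image_of_injective _ hfinj, Finset.card_univ, Fintype.card_coe]
      have hc2 := Finset.card_le_card himg
      have hc3 := Finset.card_union_le (M.map (Function.Embedding.inl (β := Fin d)))
        ((univ : Finset (Fin d)).map Function.Embedding.inr)
      rw [Finset.card_map, Finset.card_map, Finset.card_univ, Fintype.card_fin] at hc3
      omega
    have hNY : A.biUnion N ⊆ Y := by
      intro u hu
      obtain ⟨v, _, huv⟩ := Finset.mem_biUnion.mp hu
      exact (hYmem u).mpr ((hNmem _ _).mp huv).2
    have hAcolor : ∀ a ∈ A, c a = i := fun a ha => (hXmem a).mp (hAX' ha)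
    set Smax : Finset V := A ∪ (Y \ A.biUnion N) with hSmaxdef
    have hSind : (Smax : Set V).Pairwise fun u v => ¬ G.Adj u v := by
      intro a ha b hb hne hadj
      simp only [hSmaxdef, Finset.coe_union, Finset.coe_sdiff, Set.mem_union, Set.mem_diff,
        Finset.mem_coe] at ha hb
      rcases ha with haA | ⟨haY, haN⟩ <;> rcases hb with hbA | ⟨hbY, hbN⟩
      · exact hc a b hadj ((hAcolor a haA).trans (hAcolor b hbA).symm)
      · exact hbN (Finset.mem_biUnion.mpr ⟨a, haA,
          (hNmem a b).mpr ⟨hadj, (hYmem b).mp hbY⟩⟩)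
      · exact haN (Finset.mem_biUnion.mpr ⟨b, hbA,
          (hNmem b a).mpr ⟨hadj.symm, (hYmem a).mp haY⟩⟩)
      · exact hc a b hadj (((hYmem a).mp haY).trans ((hYmem b).mp hbY).symm)
    have hαS := indep_card_le_alphaNum G Smax hSind
    have hYind : (Y : Set V).Pairwise fun u v => ¬ G.Adj u v := by
      intro a ha b hb hne hadj
      exact hc a b hadj (((hYmem a).mp (Finset.mem_coe.mp ha)).trans
        ((hYmem b).mp (Finset.mem_coe.mp hb)).symm)
    have hαY := indep_card_le_alphaNum G Y hYind
    have hdisjS : Disjoint A (Y \ A.biUnion N) := by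
      rw [Finset.disjoint_left]
      intro a haA haY
      have h1 : c a = i := hAcolor a haA
      have h2 : c a = j := (hYmem a).mp (Finset.mem_sdiff.mp haY).1
      exact hij (h1.symm.trans h2)
    have hScard : Smax.card = A.card + (Y.card - (A.biUnion N).card) := by
      rw [hSmaxdef, Finset.card_union_of_disjoint hdisjS, Finset.card_sdiff_of_subset hNY]
    have hNNle : (A.biUnion N).card ≤ Y.card := Finset.card_le_card hNY
    have hFle : (F₁ ∪ F₂).card ≤ F₁.card + F₂.card := Finset.card_union_le _ _
    have hMle : M.card ≤ Y.card := Finset.card_le_card hMY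
    omega
  

lemma card_pairs (k : ℕ) :
    2 * ((univ : Finset (Fin k × Fin k)).filter (fun p => p.1 < p.2)).card + k = k * k := by
  classical
  have e1 : (univ : Finset (Fin k × Fin k)).filter (fun p => ¬ p.1 < p.2)
      = ((univ : Finset (Fin k × Fin k)).filter (fun p => p.2 < p.1)) ∪
        ((univ : Finset (Fin k × Fin k)).filter (fun p => p.1 = p.2)) := by
    ext p
    simp only [Finset.mem_filter, Finset.mem_union, Finset.mem_univ, true_and]
    omega
  have hdisj : Disjoint ((univ : Finset (Fin k × Fin k)).filter (fun p => p.2 < p.1))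
      ((univ : Finset (Fin k × Fin k)).filter (fun p => p.1 = p.2)) := by
    rw [Finset.disjoint_left]
    intro p hp1 hp2
    simp only [Finset.mem_filter] at hp1 hp2
    exact ne_of_lt hp1.2 hp2.2.symm
  have hswap : ((univ : Finset (Fin k × Fin k)).filter (fun p => p.1 < p.2)).card
      = ((univ : Finset (Fin k × Fin k)).filter (fun p => p.2 < p.1)).card := by
    apply Finset.card_nbij' Prod.swap Prod.swap
    · intro p hp; simp only [Finset.mem_coe, Finset.mem_filter, Finset.mem_univ, true_and] at hp ⊢; exact hp
    · intro p hp; simp only [Finset.mem_coe, Finset.mem_filter, Finset.mem_univ, true_and] at hp ⊢; exact hp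
    · intro p _; simp
    · intro p _; simp
  have hdiag : ((univ : Finset (Fin k × Fin k)).filter (fun p => p.1 = p.2)).card = k := by
    have : ((univ : Finset (Fin k × Fin k)).filter (fun p => p.1 = p.2)).card
        = (univ : Finset (Fin k)).card := by
      apply Finset.card_nbij' (fun p => p.1) (fun a => (a, a))
      · intro p _; exact Finset.mem_univ _
      · intro a _; simp
      · intro p hp
        simp only [Finset.mem_coe, Finset.mem_filter, Finset.mem_univ, true_and] at hp
        exact Prod.ext rfl hp
      · intro a _; rfl
    rw [this, Finset.card_univ, Fintype.card_fin]
  have htot := Finset.card_filter_add_card_filter_not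
    (s := (univ : Finset (Fin k × Fin k))) (p := fun p => p.1 < p.2)
  rw [e1, Finset.card_union_of_disjoint hdisj, hdiag, ← hswap] at htot
  have huniv : ((univ : Finset (Fin k × Fin k))).card = k * k := by simp
  omega

lemma card_pairs_containing (k : ℕ) (a : Fin k) :
    (((univ : Finset (Fin k × Fin k)).filter (fun p => p.1 < p.2)).filter
      (fun p => p.1 = a ∨ p.2 = a)).card + 1 = k := by
  classical
  have hk0 : 0 < k := a.pos
  have hcard : ((((univ : Finset (Fin k × Fin k)).filter (fun p => p.1 < p.2)).filter
      (fun p => p.1 = a ∨ p.2 = a))).card = ((univ : Finset (Fin k)).erase a).card := by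
    apply Finset.card_nbij' (fun p => if p.1 = a then p.2 else p.1)
      (fun b => if a < b then (a, b) else (b, a))
    · intro p hp
      simp only [Finset.mem_coe, Finset.mem_filter, Finset.mem_univ, true_and] at hp
      obtain ⟨hlt, hpa⟩ := hp
      rw [Finset.mem_coe, Finset.mem_erase]
      refine ⟨?_, Finset.mem_univ _⟩
      beta_reduce
      split_ifs with h1
      · exact ne_of_gt (h1 ▸ hlt)
      · exact h1
    · intro b hb
      rw [Finset.mem_coe, Finset.mem_erase] at hb
      simp only [Finset.mem_coe, Finset.mem_filter, Finset.mem_univ, true_and]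
      split_ifs with h1
      · exact ⟨h1, Or.inl rfl⟩
      · have hba : b < a := (hb.1.lt_or_gt).resolve_right h1
        exact ⟨hba, Or.inr rfl⟩
    · intro p hp
      simp only [Finset.mem_coe, Finset.mem_filter, Finset.mem_univ, true_and] at hp
      obtain ⟨hlt, hpa⟩ := hp
      beta_reduce
      by_cases h1 : p.1 = a
      · rw [if_pos h1, if_pos (h1 ▸ hlt)]
        exact Prod.ext h1.symm rfl
      · rw [if_neg h1]
        have hp2 : p.2 = a := hpa.resolve_left h1
        rw [if_neg (not_lt_of_gt (hp2 ▸ hlt))]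
        exact Prod.ext rfl hp2.symm
    · intro b hb
      rw [Finset.mem_coe, Finset.mem_erase] at hb
      beta_reduce
      by_cases h1 : a < b
      · rw [if_pos h1]
        simp
      · rw [if_neg h1]
        simp only []
        rw [if_neg hb.1]
  rw [hcard, Finset.card_erase_of_mem (Finset.mem_univ a), Finset.card_univ, Fintype.card_fin]
  omega


lemma FCC_le_alpha (G : SimpleGraph V) (k : ℕ) (hk : 2 ≤ k) (h : G.Colorable k) :
    FCC G ≤ ((k : ℝ) / 2) * alphaNum G := by
  classical
  obtain ⟨col⟩ := h
  set c : V → Fin k := fun v => col v with hcdef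
  have hc : ∀ u v, G.Adj u v → c u ≠ c v := fun u v h => col.valid h
  set P : Finset (Fin k × Fin k) := univ.filter (fun p => p.1 < p.2) with hPdef
  have H : ∀ p : Fin k × Fin k, ∃ F : Finset (Finset V), p.1 < p.2 →
      ((∀ C ∈ F, G.IsClique (C : Set V)) ∧
      (∀ C ∈ F, C.Nonempty ∧ ∀ v ∈ C, c v = p.1 ∨ c v = p.2) ∧
      (∀ v : V, c v = p.1 ∨ c v = p.2 → ∃ C ∈ F, v ∈ C) ∧
      F.card ≤ alphaNum G) := by
    intro p
    by_cases hp : p.1 < p.2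
    · obtain ⟨F, h1, h2, h3, h4⟩ := pair_cover G c hc p.1 p.2 (ne_of_lt hp)
      exact ⟨F, fun _ => ⟨h1, h2, h3, h4⟩⟩
    · exact ⟨∅, fun hh => absurd hh hp⟩
  choose F hF using H
  set y : Finset V → ℝ :=
    fun C => ((P.filter (fun p => C ∈ F p)).card : ℝ) / ((k : ℝ) - 1) with hydef
  have hk2 : (2 : ℝ) ≤ (k : ℝ) := by exact_mod_cast hk
  have hk1pos : (0 : ℝ) < (k : ℝ) - 1 := by linarith
  have hcount : ∀ a : Fin k, (P.filter (fun p => p.1 = a ∨ p.2 = a)).card + 1 = k :=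
    fun a => card_pairs_containing k a
  -- the three feasibility conditions
  have hfeas1 : ∀ C, 0 ≤ y C ∧ y C ≤ 1 := by
    intro C
    constructor
    · exact div_nonneg (Nat.cast_nonneg _) (le_of_lt hk1pos)
    · rw [hydef, div_le_one hk1pos]
      have hcC : (P.filter (fun p => C ∈ F p)).card ≤ k - 1 := by
        rcases (P.filter (fun p => C ∈ F p)).eq_empty_or_nonempty with he | ⟨p₀, hp₀⟩
        · rw [he]; simp
        · have hp₀' := Finset.mem_filter.mp hp₀
          have hp₀lt : p₀.1 < p₀.2 := (Finset.mem_filter.mp hp₀'.1).2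
          obtain ⟨⟨v₀, hv₀⟩, _⟩ := (hF p₀ hp₀lt).2.1 C hp₀'.2
          have hsub : P.filter (fun p => C ∈ F p)
              ⊆ P.filter (fun p => p.1 = c v₀ ∨ p.2 = c v₀) := by
            intro p hp
            have hp' := Finset.mem_filter.mp hp
            have hplt : p.1 < p.2 := (Finset.mem_filter.mp hp'.1).2
            have := (hF p hplt).2.1 C hp'.2
            rcases this.2 v₀ hv₀ with hcl | hcl
            · exact Finset.mem_filter.mpr ⟨hp'.1, Or.inl hcl.symm⟩
            · exact Finset.mem_filter.mpr ⟨hp'.1, Or.inr hcl.symm⟩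
          have := Finset.card_le_card hsub
          have hcnt := hcount (c v₀)
          omega
      calc ((P.filter (fun p => C ∈ F p)).card : ℝ) ≤ ((k - 1 : ℕ) : ℝ) :=
            Nat.cast_le.mpr hcC
        _ ≤ (k : ℝ) - 1 := by
            rw [Nat.cast_sub (by omega)]
            simp
  have hfeas2 : ∀ C : Finset V, ¬ G.IsClique (C : Set V) → y C = 0 := by
    intro C hC
    have he : P.filter (fun p => C ∈ F p) = ∅ := by
      rw [Finset.filter_eq_empty_iff]
      intro p hp hCF
      have hplt : p.1 < p.2 := (Finset.mem_filter.mp hp).2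
      exact hC ((hF p hplt).1 C hCF)
    simp [hydef, he]
  have hfeas3 : ∀ v : V, 1 ≤ ∑ C : Finset V, (if v ∈ C then y C else 0) := by
    intro v
    have hnat : k - 1 ≤ ∑ C : Finset V,
        (if v ∈ C then (P.filter (fun p => C ∈ F p)).card else 0) := by
      have hstep : (P.filter (fun p => p.1 = c v ∨ p.2 = c v)).card
          ≤ ∑ C : Finset V, (if v ∈ C then (P.filter (fun p => C ∈ F p)).card else 0) := by
        calc (P.filter (fun p => p.1 = c v ∨ p.2 = c v)).card
            = ∑ p ∈ P, (if p.1 = c v ∨ p.2 = c v then 1 else 0) := Finset.card_filter _ _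
          _ ≤ ∑ p ∈ P, ∑ C : Finset V, (if v ∈ C ∧ C ∈ F p then 1 else 0) := by
              apply Finset.sum_le_sum
              intro p hp
              split_ifs with hpa
              · have hplt : p.1 < p.2 := (Finset.mem_filter.mp hp).2
                have hcv : c v = p.1 ∨ c v = p.2 := by
                  rcases hpa with hh | hh
                  · exact Or.inl hh.symm
                  · exact Or.inr hh.symm
                obtain ⟨C, hCF, hvC⟩ := (hF p hplt).2.2.1 v hcv
                have := Finset.single_le_sum
                  (f := fun C : Finset V => if v ∈ C ∧ C ∈ F p then (1 : ℕ) else 0)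
                  (fun _ _ => Nat.zero_le _) (Finset.mem_univ C)
                simpa [hvC, hCF] using this
              · exact Nat.zero_le _
          _ = ∑ C : Finset V, ∑ p ∈ P, (if v ∈ C ∧ C ∈ F p then 1 else 0) :=
              Finset.sum_comm
          _ = ∑ C : Finset V, (if v ∈ C then (P.filter (fun p => C ∈ F p)).card else 0) := by
              apply Finset.sum_congr rfl
              intro C _
              rw [Finset.card_filter]
              split_ifs with hvC
              · apply Finset.sum_congr rfl
                intro p _
                simp [hvC]
              · simp [hvC]
      have := hcount (c v)
      omega
    have hsum : ∑ C : Finset V, (if v ∈ C then y C else 0)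
        = ((∑ C : Finset V, (if v ∈ C then (P.filter (fun p => C ∈ F p)).card else 0) : ℕ) : ℝ)
          / ((k : ℝ) - 1) := by
      rw [Nat.cast_sum, Finset.sum_div]
      apply Finset.sum_congr rfl
      intro C _
      split_ifs with hvC
      · rw [hydef]
      · simp
    rw [hsum, le_div_iff₀ hk1pos, one_mul]
    calc (k : ℝ) - 1 = ((k - 1 : ℕ) : ℝ) := by
          rw [Nat.cast_sub (by omega)]; simp
      _ ≤ _ := Nat.cast_le.mpr hnat
  -- the value of the cover
  have hval : ∑ C : Finset V, y C ≤ ((k : ℝ) / 2) * alphaNum G := by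
    have hnat : ∑ C : Finset V, (P.filter (fun p => C ∈ F p)).card
        ≤ P.card * alphaNum G := by
      calc ∑ C : Finset V, (P.filter (fun p => C ∈ F p)).card
          = ∑ C : Finset V, ∑ p ∈ P, (if C ∈ F p then 1 else 0) := by
            apply Finset.sum_congr rfl
            intro C _
            exact Finset.card_filter _ _
        _ = ∑ p ∈ P, ∑ C : Finset V, (if C ∈ F p then 1 else 0) := Finset.sum_comm
        _ = ∑ p ∈ P, (F p).card := by
            apply Finset.sum_congr rfl
            intro p _
            rw [← Finset.card_filter, Finset.filter_univ_mem]
        _ ≤ ∑ p ∈ P, alphaNum G := by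
            apply Finset.sum_le_sum
            intro p hp
            exact (hF p (Finset.mem_filter.mp hp).2).2.2.2
        _ = P.card * alphaNum G := by rw [Finset.sum_const, smul_eq_mul]
    have hPcard : 2 * P.card + k = k * k := card_pairs k
    have hsumy : ∑ C : Finset V, y C
        = ((∑ C : Finset V, (P.filter (fun p => C ∈ F p)).card : ℕ) : ℝ) / ((k : ℝ) - 1) := by
      rw [Nat.cast_sum, Finset.sum_div]
    rw [hsumy, div_le_iff₀ hk1pos]
    have hPc : (2 : ℝ) * P.card + k = (k : ℝ) * k := by exact_mod_cast hPcard
    have hα0 : (0 : ℝ) ≤ (alphaNum G : ℝ) := Nat.cast_nonneg _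
    have hPle : (P.card : ℝ) ≤ (k : ℝ) / 2 * ((k : ℝ) - 1) := by linarith
    calc ((∑ C : Finset V, (P.filter (fun p => C ∈ F p)).card : ℕ) : ℝ)
        ≤ ((P.card * alphaNum G : ℕ) : ℝ) := Nat.cast_le.mpr hnat
      _ = (P.card : ℝ) * (alphaNum G : ℝ) := by push_cast; ring
      _ ≤ ((k : ℝ) / 2 * ((k : ℝ) - 1)) * (alphaNum G : ℝ) :=
          mul_le_mul_of_nonneg_right hPle hα0
      _ = (k : ℝ) / 2 * (alphaNum G : ℝ) * ((k : ℝ) - 1) := by ring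
  -- conclude
  have hbdd : BddBelow {s : ℝ | ∃ y : Finset V → ℝ, (∀ C, 0 ≤ y C ∧ y C ≤ 1) ∧
      (∀ C : Finset V, ¬ G.IsClique (C : Set V) → y C = 0) ∧
      (∀ v : V, 1 ≤ ∑ C : Finset V, (if v ∈ C then y C else 0)) ∧
      s = ∑ C : Finset V, y C} := by
    refine ⟨0, ?_⟩
    rintro s ⟨y', hy', _, _, rfl⟩
    exact Finset.sum_nonneg fun C _ => (hy' C).1
  exact le_trans (csInf_le hbdd ⟨y, hfeas1, hfeas2, hfeas3, rfl⟩) hval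

end Aux

/-- For `k`-colorable `G` (`k ≥ 2`), the fractional clique cover is a
`k/2`-approximation of the index coding broadcast rate. -/
theorem stmt11 (G : SimpleGraph V) (k : ℕ) (hk : 2 ≤ k) (h : G.Colorable k) :
    FCC G / Ind G ≤ (k : ℝ) / 2 := by
  have h1 := alphaNum_le_Ind G
  have h2 := FCC_le_alpha G k hk h
  have hk0 : (0 : ℝ) ≤ (k : ℝ) / 2 := by positivity
  have hInd0 : 0 ≤ Ind G := le_trans (Nat.cast_nonneg _) h1
  rcases eq_or_lt_of_le hInd0 with heq | hpos
  · rw [← heq, div_zero]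
    exact hk0
  · rw [div_le_iff₀ hpos]
    calc FCC G ≤ ((k : ℝ) / 2) * alphaNum G := h2
      _ ≤ ((k : ℝ) / 2) * Ind G := mul_le_mul_of_nonneg_left h1 hk0
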